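/- For all 0 ≤ t < T, m > 0, and p₁ ≤ p₂ ≤ P̄ one has 0 ≤ ū_BS(t, m, p₁) ≤ ū_BS(t, m, p₂). In other words, the Black–Scholes barrier-induced trading rate is nonnegative and is nonincreasing in the moneyness P̄ − p. -/

import Mathlib

open MeasureTheory intervalIntegral

noncomputable section

/-- `G(t) = β cosh(β t) + λ⁻¹ Γ sinh(β t)` with `β = √(γ/λ)`. -/
def Gfun (lam gam Gam : ℝ) (t : ℝ) : ℝ :=
  Real.sqrt (gam / lam) * Real.cosh (Real.sqrt (gam / lam) * t)
    + lam⁻¹ * Gam * Real.sinh (Real.sqrt (gam / lam) * t)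

/-- The standard normal density `φ(x) = exp(−x²/2)/√(2π)`. -/
def stdNormalPdf (x : ℝ) : ℝ := Real.exp (-x ^ 2 / 2) / Real.sqrt (2 * Real.pi)

/-- The standard normal cumulative distribution function `Φ(x) = ∫_{−∞}^x φ(y) dy`. -/
def stdNormalCdf (x : ℝ) : ℝ := ∫ y in Set.Iic x, stdNormalPdf y

/-- `f(u, m, p) = σ√u/2 − (1/(σ√u)) log((P̄−p)/m + 1)`. -/
def fBS (σ Pbar : ℝ) (u m p : ℝ) : ℝ :=
  σ * Real.sqrt u / 2 - (1 / (σ * Real.sqrt u)) * Real.log ((Pbar - p) / m + 1)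

/-- The Black–Scholes barrier-induced trading rate
`ū_BS(t,m,p) = (m/(2λ)) ∫_t^T (G(T−s)/G(T−t)) [(σ/√(s−t)) φ(f(s−t,m,p)) + (σ²/2) Φ(f(s−t,m,p))] ds`. -/
def uBS (T lam gam Gam σ Pbar : ℝ) (t m p : ℝ) : ℝ :=
  (m / (2 * lam)) * ∫ s in t..T,
    (Gfun lam gam Gam (T - s) / Gfun lam gam Gam (T - t))
      * ((σ / Real.sqrt (s - t)) * stdNormalPdf (fBS σ Pbar (s - t) m p)
          + (σ ^ 2 / 2) * stdNormalCdf (fBS σ Pbar (s - t) m p))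



lemma pdf_pos (x : ℝ) : 0 < stdNormalPdf x := by
  unfold stdNormalPdf
  positivity

lemma pdf_le_one (x : ℝ) : stdNormalPdf x ≤ 1 := by
  unfold stdNormalPdf
  rw [div_le_one (by positivity)]
  calc Real.exp (-x ^ 2 / 2) ≤ 1 := Real.exp_le_one_iff.2 (by nlinarith [sq_nonneg x])
    _ ≤ Real.sqrt (2 * Real.pi) := by
        rw [show (1:ℝ) = Real.sqrt 1 by simp]
        exact Real.sqrt_le_sqrt (by nlinarith [Real.pi_gt_three])

lemma pdf_continuous : Continuous stdNormalPdf := by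
  unfold stdNormalPdf
  fun_prop

lemma pdf_eq (x : ℝ) : stdNormalPdf x = Real.exp (-(1/2) * x ^ 2) / Real.sqrt (2 * Real.pi) := by
  unfold stdNormalPdf; ring_nf

lemma pdf_integrable : Integrable stdNormalPdf := by
  have h := (integrable_exp_neg_mul_sq (by norm_num : (0:ℝ) < 1/2)).div_const
    (Real.sqrt (2 * Real.pi))
  exact h.congr (by filter_upwards with x using (pdf_eq x).symm)

lemma pdf_integral : ∫ x, stdNormalPdf x = 1 := by
  simp only [pdf_eq]
  rw [MeasureTheory.integral_div, integral_gaussian, div_eq_one_iff_eq (by positivity)]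
  congr 1
  field_simp

lemma cdf_nonneg (x : ℝ) : 0 ≤ stdNormalCdf x :=
  setIntegral_nonneg measurableSet_Iic fun y _ => (pdf_pos y).le

lemma cdf_le_one (x : ℝ) : stdNormalCdf x ≤ 1 := by
  rw [← pdf_integral]
  exact setIntegral_le_integral pdf_integrable
    (by filter_upwards with y using (pdf_pos y).le)

lemma cdf_mono : Monotone stdNormalCdf := fun a b hab => by
  unfold stdNormalCdf
  exact setIntegral_mono_set pdf_integrable.integrableOn
    (by filter_upwards with y using (pdf_pos y).le)
    (HasSubset.Subset.eventuallyLE (Set.Iic_subset_Iic.2 hab))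

lemma cdf_hasDeriv (x : ℝ) : HasDerivAt stdNormalCdf (stdNormalPdf x) x := by
  have heq : stdNormalCdf = fun u => stdNormalCdf 0 + ∫ y in (0:ℝ)..u, stdNormalPdf y := by
    funext u
    rw [← intervalIntegral.integral_Iic_sub_Iic pdf_integrable.integrableOn
      pdf_integrable.integrableOn]
    unfold stdNormalCdf; ring
  rw [heq]
  exact (intervalIntegral.integral_hasDerivAt_right pdf_integrable.intervalIntegrable
    (pdf_continuous.stronglyMeasurableAtFilter _ _)
    pdf_continuous.continuousAt).const_add _

lemma pdf_hasDeriv (x : ℝ) : HasDerivAt stdNormalPdf (-x * stdNormalPdf x) x := by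
  have h1 : HasDerivAt (fun y : ℝ => -y ^ 2 / 2) (-x) x := by
    have := ((hasDerivAt_pow 2 x).neg).div_const 2
    exact this.congr_deriv (by norm_num; ring)
  have h2 := (h1.exp).div_const (Real.sqrt (2 * Real.pi))
  exact h2.congr_deriv (by unfold stdNormalPdf; ring)


lemma bracket_hasDeriv (a b c d L : ℝ) (hd : c * a = d) :
    HasDerivAt (fun L => c * stdNormalPdf (a - b * L) + d * stdNormalCdf (a - b * L))
      (-(c * b ^ 2 * L * stdNormalPdf (a - b * L))) L := by
  have hin : HasDerivAt (fun L : ℝ => a - b * L) (-b) L := by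
    simpa using ((hasDerivAt_id L).const_mul b).const_sub a
  have h1 := ((pdf_hasDeriv (a - b * L)).comp L hin).const_mul c
  have h2 := ((cdf_hasDeriv (a - b * L)).comp L hin).const_mul d
  have := h1.add h2
  subst hd
  exact this.congr_deriv (by ring)

lemma bracket_antitone {a b c d : ℝ} (hb : 0 ≤ b) (hc : 0 ≤ c) (hd : c * a = d) :
    AntitoneOn (fun L => c * stdNormalPdf (a - b * L) + d * stdNormalCdf (a - b * L))
      (Set.Ici (0:ℝ)) := by
  apply antitoneOn_of_deriv_nonpos (convex_Ici 0)
  · exact fun x _ => ((bracket_hasDeriv a b c d x hd).continuousAt).continuousWithinAt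
  · intro x hx
    exact ((bracket_hasDeriv a b c d x hd).differentiableAt).differentiableWithinAt
  · intro x hx
    rw [interior_Ici] at hx
    rw [(bracket_hasDeriv a b c d x hd).deriv]
    have hp := pdf_pos (a - b * x)
    have hx' : (0:ℝ) ≤ x := le_of_lt hx
    exact neg_nonpos.2 (mul_nonneg (mul_nonneg (mul_nonneg hc (sq_nonneg b)) hx') hp.le)

lemma G_pos {lam gam Gam : ℝ} (hlam : 0 < lam) (hgam : 0 < gam) (hGam : 0 < Gam)
    {x : ℝ} (hx : 0 ≤ x) : 0 < Gfun lam gam Gam x := by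
  unfold Gfun
  have hβ : 0 < Real.sqrt (gam / lam) := Real.sqrt_pos.2 (by positivity)
  have h1 : 0 < Real.cosh (Real.sqrt (gam / lam) * x) := Real.cosh_pos _
  have h2 : 0 ≤ Real.sinh (Real.sqrt (gam / lam) * x) :=
    Real.sinh_nonneg_iff.2 (by positivity)
  have : 0 < lam⁻¹ * Gam := by positivity
  nlinarith

lemma G_mono {lam gam Gam : ℝ} (hlam : 0 < lam) (hgam : 0 < gam) (hGam : 0 < Gam)
    {x y : ℝ} (hx : 0 ≤ x) (hxy : x ≤ y) : Gfun lam gam Gam x ≤ Gfun lam gam Gam y := by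
  unfold Gfun
  have hβ : 0 ≤ Real.sqrt (gam / lam) := Real.sqrt_nonneg _
  have hc : Real.cosh (Real.sqrt (gam / lam) * x) ≤ Real.cosh (Real.sqrt (gam / lam) * y) :=
    Real.cosh_le_cosh.2 (by
      rw [abs_of_nonneg (by positivity), abs_of_nonneg (mul_nonneg hβ (hx.trans hxy))]
      exact mul_le_mul_of_nonneg_left hxy hβ)
  have hs : Real.sinh (Real.sqrt (gam / lam) * x) ≤ Real.sinh (Real.sqrt (gam / lam) * y) :=
    Real.sinh_le_sinh.2 (mul_le_mul_of_nonneg_left hxy hβ)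
  have : 0 ≤ lam⁻¹ * Gam := by positivity
  nlinarith

/-- for `0 ≤ t < T`, `m > 0`, and `p₁ ≤ p₂ ≤ P̄`,
`0 ≤ ū_BS(t, m, p₁) ≤ ū_BS(t, m, p₂)`: the Black–Scholes barrier-induced rate is
nonnegative and nonincreasing in the moneyness `P̄ − p`. -/
theorem uBS_nonneg_monotone_in_price
    (T lam gam Gam σ Pbar : ℝ) (hlam : 0 < lam) (hgam : 0 < gam) (hGam : 0 < Gam)
    (hσ : 0 < σ) :
    ∀ t, 0 ≤ t → t < T → ∀ m, 0 < m → ∀ p₁ p₂, p₁ ≤ p₂ → p₂ ≤ Pbar →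
      0 ≤ uBS T lam gam Gam σ Pbar t m p₁
      ∧ uBS T lam gam Gam σ Pbar t m p₁ ≤ uBS T lam gam Gam σ Pbar t m p₂ := by
  intro t ht0 htT m hm p₁ p₂ hp hp2
  set g : ℝ → ℝ → ℝ := fun p s =>
    (Gfun lam gam Gam (T - s) / Gfun lam gam Gam (T - t))
      * ((σ / Real.sqrt (s - t)) * stdNormalPdf (fBS σ Pbar (s - t) m p)
          + (σ ^ 2 / 2) * stdNormalCdf (fBS σ Pbar (s - t) m p)) with hg
  have hGt : 0 < Gfun lam gam Gam (T - t) := G_pos hlam hgam hGam (by linarith)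
  -- ratio bounds
  have hR0 : ∀ s, s ≤ T → 0 ≤ Gfun lam gam Gam (T - s) / Gfun lam gam Gam (T - t) :=
    fun s hs => div_nonneg (G_pos hlam hgam hGam (by linarith)).le hGt.le
  have hR1 : ∀ s, t ≤ s → s ≤ T → Gfun lam gam Gam (T - s) / Gfun lam gam Gam (T - t) ≤ 1 :=
    fun s hts hs => (div_le_one hGt).2 (G_mono hlam hgam hGam (by linarith) (by linarith))
  -- bracket bounds
  have hB0 : ∀ p s, 0 ≤ (σ / Real.sqrt (s - t)) * stdNormalPdf (fBS σ Pbar (s - t) m p)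
      + (σ ^ 2 / 2) * stdNormalCdf (fBS σ Pbar (s - t) m p) := fun p s =>
    add_nonneg (mul_nonneg (div_nonneg hσ.le (Real.sqrt_nonneg _)) (pdf_pos _).le)
      (mul_nonneg (by positivity) (cdf_nonneg _))
  have hB1 : ∀ p s, (σ / Real.sqrt (s - t)) * stdNormalPdf (fBS σ Pbar (s - t) m p)
      + (σ ^ 2 / 2) * stdNormalCdf (fBS σ Pbar (s - t) m p)
      ≤ σ / Real.sqrt (s - t) + σ ^ 2 / 2 := fun p s => by
    have h1 := mul_le_mul_of_nonneg_left (pdf_le_one (fBS σ Pbar (s - t) m p))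
      (div_nonneg hσ.le (Real.sqrt_nonneg (s - t)))
    have h2 := mul_le_mul_of_nonneg_left (cdf_le_one (fBS σ Pbar (s - t) m p))
      (by positivity : (0:ℝ) ≤ σ ^ 2 / 2)
    calc _ ≤ σ / Real.sqrt (s - t) * 1 + σ ^ 2 / 2 * 1 := add_le_add h1 h2
      _ = _ := by ring
  -- nonnegativity of g
  have hgnn : ∀ p s, s ∈ Set.Icc t T → 0 ≤ g p s := fun p s hs =>
    mul_nonneg (hR0 s hs.2) (hB0 p s)
  -- measurability
  have hmeas : ∀ p, AEStronglyMeasurable (g p) (volume.restrict (Set.uIoc t T)) := by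
    intro p
    have m1 : Measurable fun s : ℝ => fBS σ Pbar (s - t) m p := by
      unfold fBS
      have : Measurable fun s : ℝ => Real.sqrt (s - t) :=
        (Real.continuous_sqrt.comp (continuous_id.sub continuous_const)).measurable
      exact ((this.const_mul σ).div_const 2).sub
        ((measurable_const.div (this.const_mul σ)).mul measurable_const)
    have m2 : Measurable (g p) := by
      apply Measurable.mul
      · have cG : Continuous (Gfun lam gam Gam) := by unfold Gfun; fun_prop
        exact ((cG.comp (continuous_const.sub continuous_id)).measurable).div_const _
      · exact ((measurable_const.div
          ((Real.continuous_sqrt.comp (continuous_id.sub continuous_const)).measurable)).mul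
          (pdf_continuous.measurable.comp m1)).add
          ((cdf_mono.measurable.comp m1).const_mul _)
    exact m2.aestronglyMeasurable
  -- integrability
  have hFint : IntervalIntegrable
      (fun s => σ * (s - t) ^ (-(1/2) : ℝ) + σ ^ 2 / 2) volume t T := by
    have h0 : IntervalIntegrable (fun x : ℝ => x ^ (-(1/2) : ℝ)) volume 0 (T - t) :=
      intervalIntegral.intervalIntegrable_rpow' (by norm_num)
    have h1 := (h0.comp_sub_right t)
    rw [zero_add, sub_add_cancel] at h1
    exact (h1.const_mul σ).add (intervalIntegrable_const)
  have hint : ∀ p, IntervalIntegrable (g p) volume t T := by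
    intro p
    apply (hFint.mono_fun (hmeas p))
    rw [Filter.EventuallyLE, ae_restrict_iff' measurableSet_uIoc]
    filter_upwards with s hs
    rw [Set.uIoc_of_le htT.le] at hs
    have hu : 0 < s - t := by linarith [hs.1]
    have hrw : σ * (s - t) ^ (-(1/2) : ℝ) = σ / Real.sqrt (s - t) := by
      rw [Real.rpow_neg hu.le, ← Real.sqrt_eq_rpow, div_eq_mul_inv]
    have hgle : g p s ≤ σ * (s - t) ^ (-(1/2) : ℝ) + σ ^ 2 / 2 := by
      rw [hrw, hg]
      calc _ ≤ 1 * ((σ / Real.sqrt (s - t)) * stdNormalPdf (fBS σ Pbar (s - t) m p)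
            + (σ ^ 2 / 2) * stdNormalCdf (fBS σ Pbar (s - t) m p)) :=
            mul_le_mul_of_nonneg_right (hR1 s hs.1.le hs.2) (hB0 p s)
        _ = _ := one_mul _
        _ ≤ _ := hB1 p s
    have hgnn' : 0 ≤ g p s := hgnn p s ⟨hs.1.le, hs.2⟩
    simp only [Real.norm_eq_abs, abs_of_nonneg hgnn']
    calc g p s ≤ _ := hgle
      _ ≤ |σ * (s - t) ^ (-(1/2) : ℝ) + σ ^ 2 / 2| := le_abs_self _
  -- pointwise monotonicity in p
  have hptwise : ∀ s ∈ Set.Icc t T, g p₁ s ≤ g p₂ s := by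
    intro s hs
    apply mul_le_mul_of_nonneg_left _ (hR0 s hs.2)
    rcases eq_or_lt_of_le hs.1 with heq | hlt
    · subst heq
      simp [fBS]
    · set u := s - t with hu
      have hupos : 0 < u := by linarith
      have hsq : 0 < Real.sqrt u := Real.sqrt_pos.2 hupos
      have key := bracket_antitone (a := σ * Real.sqrt u / 2) (b := 1 / (σ * Real.sqrt u))
        (c := σ / Real.sqrt u) (d := σ ^ 2 / 2)
        (by positivity) (by positivity) (by field_simp)
      have hfeq : ∀ p, fBS σ Pbar u m p
          = σ * Real.sqrt u / 2 - 1 / (σ * Real.sqrt u) * Real.log ((Pbar - p) / m + 1) :=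
        fun p => rfl
      have hL : ∀ p, p ≤ Pbar → (0:ℝ) ≤ Real.log ((Pbar - p) / m + 1) := by
        intro p hpb
        apply Real.log_nonneg
        have : 0 ≤ (Pbar - p) / m := div_nonneg (by linarith) hm.le
        linarith
      have hL1 : Real.log ((Pbar - p₂) / m + 1) ≤ Real.log ((Pbar - p₁) / m + 1) := by
        apply Real.log_le_log (by
          have : 0 ≤ (Pbar - p₂) / m := div_nonneg (by linarith) hm.le
          linarith)
        have : (Pbar - p₂) / m ≤ (Pbar - p₁) / m :=
          (div_le_div_iff_of_pos_right hm).2 (by linarith)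
        linarith
      have := key (Set.mem_Ici.2 (hL p₂ hp2)) (Set.mem_Ici.2 (hL p₁ (hp.trans hp2))) hL1
      simpa [hfeq] using this
  constructor
  · unfold uBS
    apply mul_nonneg (by positivity)
    exact intervalIntegral.integral_nonneg htT.le (fun s hs => hgnn p₁ s hs)
  · unfold uBS
    apply mul_le_mul_of_nonneg_left _ (by positivity)
    exact intervalIntegral.integral_mono_on htT.le (hint p₁) (hint p₂) hptwise

end
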